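/- arXiv:1505.00368 — 5 statements merged into one kernel-verified Lean document; each statement's English description precedes it below -/
import Mathlib

section
/- If U and V are ultrafilters on ω and there exists a cofinal map from (U, ⊇) to (V, ⊇), then there exists a monotone cofinal map from U to V (where monotone means X ⊇ Y implies f(X) ⊇ f(Y)). -/
/-- `C` is a cofinal subset (filter base) of the ultrafilter `U`, ordered by `⊇`. -/
def IsCofinalSub (U : Ultrafilter ℕ) (C : Set (Set ℕ)) : Prop :=
  (∀ X ∈ C, X ∈ U) ∧ ∀ X ∈ U, ∃ Y ∈ C, Y ⊆ X

/-- `f` is a cofinal map from `U` to `V`: it carries every cofinal subset (filter base)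
of `U` to a cofinal subset (filter base) of `V`. -/
def IsCofinalMap (U V : Ultrafilter ℕ) (f : Set ℕ → Set ℕ) : Prop :=
  ∀ C : Set (Set ℕ), IsCofinalSub U C → IsCofinalSub V (f '' C)

/-- `f` is monotone on `U`: `X ⊇ Y` implies `f X ⊇ f Y` for members of `U`. -/
def MonotoneOnU (U : Ultrafilter ℕ) (f : Set ℕ → Set ℕ) : Prop :=
  ∀ X Y : Set ℕ, X ∈ U → Y ∈ U → Y ⊆ X → f Y ⊆ f X

/-- If there is a cofinal map from `U` to `V`, then there is a monotone cofinal map. -/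
theorem exists_monotone_cofinal_map (U V : Ultrafilter ℕ)
    (h : ∃ f : Set ℕ → Set ℕ, IsCofinalMap U V f) :
    ∃ f : Set ℕ → Set ℕ, IsCofinalMap U V f ∧ MonotoneOnU U f := by
  obtain ⟨f, hf⟩ := h
  have hU : IsCofinalSub U {X | X ∈ U} :=
    ⟨fun X hX => hX, fun X hX => ⟨X, hX, subset_rfl⟩⟩
  have hfV : ∀ X ∈ U, f X ∈ V := fun X hX => (hf _ hU).1 (f X) ⟨X, hX, rfl⟩
  -- key lemma: for each W ∈ V there is X ∈ U below which f lands inside W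
  have key : ∀ W ∈ V, ∃ X ∈ U, ∀ Z ∈ U, Z ⊆ X → f Z ⊆ W := by
    intro W hW
    by_contra hc
    push_neg at hc
    choose Z hZU hZsub hZne using hc
    set C : Set (Set ℕ) := {Y | ∃ X, ∃ hX : X ∈ U, Y = Z X hX} with hCdef
    have hCcof : IsCofinalSub U C := by
      constructor
      · rintro Y ⟨X, hX, rfl⟩
        exact hZU X hX
      · intro X hX
        exact ⟨Z X hX, ⟨X, hX, rfl⟩, hZsub X hX⟩
    obtain ⟨S, hS, hSW⟩ := (hf C hCcof).2 W hW
    obtain ⟨Y, ⟨X, hX, rfl⟩, rfl⟩ := hS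
    exact hZne X hX hSW
  -- the monotone map
  set g : Set ℕ → Set ℕ := fun X => ⋃₀ {S | ∃ Z, Z ∈ U ∧ Z ⊆ X ∧ S = f Z} with hgdef
  have hmono : MonotoneOnU U g := by
    intro X Y _ _ hYX
    apply Set.sUnion_subset_sUnion
    rintro S ⟨Z, hZ, hZY, rfl⟩
    exact ⟨Z, hZ, hZY.trans hYX, rfl⟩
  have hsub : ∀ X ∈ U, f X ⊆ g X := by
    intro X hX
    exact Set.subset_sUnion_of_mem ⟨X, hX, subset_rfl, rfl⟩
  refine ⟨g, ?_, hmono⟩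
  intro C hC
  constructor
  · rintro S ⟨Y, hYC, rfl⟩
    have hYU := hC.1 Y hYC
    exact V.toFilter.mem_of_superset (hfV Y hYU) (hsub Y hYU)
  · intro W hW
    obtain ⟨X, hXU, hX⟩ := key W hW
    obtain ⟨Y, hYC, hYX⟩ := hC.2 X hXU
    refine ⟨g Y, ⟨Y, hYC, rfl⟩, ?_⟩
    apply Set.sUnion_subset
    rintro S ⟨Z, hZ, hZY, rfl⟩
    exact hX Z hZ (hZY.trans hYX)
end

section
/- Suppose U and V are nonprincipal ultrafilters on ω, f : U → V is a monotone cofinal map, and there is a cofinal subset C ⊆ U such that f↾C is generated by a basic map. Then there is a monotone map f̃ : 2^ω → 2^ω such that: (1) f̃ is generated by a basic map; (2) f̃↾C = f↾C; and (3) f̃↾U is a cofinal map from U to V. -/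
/-- The characteristic function of `X ∩ k` with domain `k`. -/
noncomputable def restr (X : Set ℕ) (k : ℕ) : List Bool :=
  (List.range k).map (fun i => @decide (i ∈ X) (Classical.propDecidable _))

/-- `s ⊆ t` as characteristic functions of sets. -/
def lsubset (s t : List Bool) : Prop :=
  ∀ i, s.getD i false = true → t.getD i false = true

/-- `fh` is a basic map on `C ⊆ ⋃_m 2^{k_m}`: level preserving,
end-extension preserving, and monotone. -/
def IsBasicOn (k : ℕ → ℕ) (C : Set (List Bool)) (fh : List Bool → List Bool) : Prop :=
  StrictMono k ∧
  (∀ s ∈ C, ∃ m, s.length = k m) ∧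
  (∀ s ∈ C, ∀ m, s.length = k m → (fh s).length = m) ∧
  (∀ s ∈ C, ∀ t ∈ C, s <+: t → fh s <+: fh t) ∧
  (∀ s ∈ C, ∀ t ∈ C, lsubset s t → lsubset (fh s) (fh t))

/-- The set `{X↾k_m : X ∈ 𝒞, m < ω}` of level-restrictions of members of `𝒞`. -/
def levelsOf (k : ℕ → ℕ) (𝒞 : Set (Set ℕ)) : Set (List Bool) :=
  {s | ∃ X ∈ 𝒞, ∃ m, s = restr X (k m)}

/-- `fh` generates `f` on `𝒞`: `f(X) = ⋃_m fh(X↾k_m)` for each `X ∈ 𝒞`. -/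
def GeneratesOn (k : ℕ → ℕ) (fh : List Bool → List Bool)
    (f : Set ℕ → Set ℕ) (𝒞 : Set (Set ℕ)) : Prop :=
  ∀ X ∈ 𝒞, f X = {i | ∃ m, (fh (restr X (k m))).getD i false = true}

/-! ### Auxiliary lemmas for the Extension Lemma -/

lemma mapRange_getD (f : ℕ → Bool) (n i : ℕ) :
    ((List.range n).map f).getD i false = true ↔ i < n ∧ f i = true := by
  rcases lt_or_ge i n with h | h
  · rw [List.getD_eq_getElem _ _ (by simpa using h)]
    simp [h]
  · rw [List.getD_eq_default _ _ (by simpa using h)]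
    simp [h.not_gt]

lemma restr_length (X : Set ℕ) (n : ℕ) : (restr X n).length = n := by simp [restr]

lemma restr_getD (X : Set ℕ) (n i : ℕ) :
    (restr X n).getD i false = true ↔ i < n ∧ i ∈ X := by
  rw [restr, mapRange_getD]
  simp

lemma getD_true_lt_length {l : List Bool} {i : ℕ} (h : l.getD i false = true) :
    i < l.length := by
  by_contra h'
  rw [List.getD_eq_default _ _ (le_of_not_gt h')] at h
  exact Bool.false_ne_true h

lemma getD_of_prefix {s t : List Bool} (h : s <+: t) {i : ℕ} (hi : i < s.length) :
    t.getD i false = s.getD i false := by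
  obtain ⟨r, rfl⟩ := h
  rw [List.getD_eq_getElem _ _ hi, List.getD_eq_getElem _ _ (by simp; omega),
    List.getElem_append_left hi]

lemma lsubset_refl (s : List Bool) : lsubset s s := fun _ h => h

lemma lsubset_trans {s t u : List Bool} (h1 : lsubset s t) (h2 : lsubset t u) :
    lsubset s u := fun i hi => h2 i (h1 i hi)

lemma lsubset_of_prefix {s t : List Bool} (h : s <+: t) : lsubset s t := by
  intro i hi
  rw [getD_of_prefix h (getD_true_lt_length hi)]
  exact hi

lemma restr_prefix (X : Set ℕ) {a b : ℕ} (h : a ≤ b) : restr X a <+: restr X b := by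
  have heq : restr X a = (restr X b).take a := by
    rw [restr, restr, ← List.map_take, List.take_range, min_eq_left h]
  rw [heq]
  exact List.take_prefix a (restr X b)

lemma lsubset_restr_restr {X Y : Set ℕ} {a b : ℕ} (hXY : X ⊆ Y) (hab : a ≤ b) :
    lsubset (restr X a) (restr Y b) := by
  intro i hi
  rw [restr_getD] at hi ⊢
  exact ⟨lt_of_lt_of_le hi.1 hab, hXY hi.2⟩

lemma lsubset_restr_of_lt {Y : Set ℕ} {a b : ℕ}
    (hb : ∀ i, (restr Y a).getD i false = true → i < b) :
    lsubset (restr Y a) (restr Y b) := by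
  intro i hi
  have hlt := hb i hi
  rw [restr_getD] at hi ⊢
  exact ⟨hlt, hi.2⟩

/-- The witness condition defining the extended basic map. -/
def Pgen (k : ℕ → ℕ) (𝒞 : Set (Set ℕ)) (fh : List Bool → List Bool)
    (s : List Bool) (m i : ℕ) : Prop :=
  ∃ j ≤ m, ∃ Y ∈ 𝒞, lsubset (restr Y (k j)) s ∧ (fh (restr Y (k j))).getD i false = true

open Classical in
/-- The extended basic map. -/
noncomputable def ghAux (k : ℕ → ℕ) (𝒞 : Set (Set ℕ)) (fh : List Bool → List Bool)
    (s : List Bool) : List Bool :=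
  if h : ∃ m, s.length = k m then
    (List.range h.choose).map
      (fun i => @decide (Pgen k 𝒞 fh s h.choose i) (Classical.propDecidable _))
  else []

lemma ghAux_eq {k : ℕ → ℕ} (hk : StrictMono k) (𝒞 : Set (Set ℕ))
    (fh : List Bool → List Bool) {s : List Bool} {m : ℕ} (hm : s.length = k m) :
    ghAux k 𝒞 fh s = (List.range m).map
      (fun i => @decide (Pgen k 𝒞 fh s m i) (Classical.propDecidable _)) := by
  have h : ∃ m, s.length = k m := ⟨m, hm⟩
  have hc : h.choose = m := hk.injective (by rw [← h.choose_spec, hm])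
  rw [ghAux, dif_pos h, hc]

lemma ghAux_getD {k : ℕ → ℕ} (hk : StrictMono k) (𝒞 : Set (Set ℕ))
    (fh : List Bool → List Bool) {s : List Bool} {m : ℕ} (hm : s.length = k m) (i : ℕ) :
    (ghAux k 𝒞 fh s).getD i false = true ↔ i < m ∧ Pgen k 𝒞 fh s m i := by
  rw [ghAux_eq hk 𝒞 fh hm, mapRange_getD]
  simp

lemma ghAux_basic {k : ℕ → ℕ} {𝒞 : Set (Set ℕ)} {fh : List Bool → List Bool}
    (hb : IsBasicOn k (levelsOf k 𝒞) fh) :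
    IsBasicOn k {s | ∃ m, s.length = k m} (ghAux k 𝒞 fh) := by
  obtain ⟨hk, -, hlen, hpre, hmon⟩ := hb
  have hfhlen : ∀ Y ∈ 𝒞, ∀ j, (fh (restr Y (k j))).length = j := fun Y hY j =>
    hlen _ ⟨Y, hY, j, rfl⟩ j (restr_length Y (k j))
  refine ⟨hk, fun s hs => hs, ?_, ?_, ?_⟩
  · rintro s ⟨m', hm'⟩ m hm
    rw [ghAux_eq hk 𝒞 fh hm]
    simp
  · -- end-extension preserving
    rintro s ⟨m, hm⟩ t ⟨m', hm'⟩ hst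
    have hmm' : m ≤ m' := by
      have hle := hst.length_le
      rw [hm, hm'] at hle
      exact (hk.le_iff_le).mp hle
    rw [ghAux_eq hk 𝒞 fh hm, ghAux_eq hk 𝒞 fh hm']
    have heq : (List.range m).map
          (fun i => @decide (Pgen k 𝒞 fh s m i) (Classical.propDecidable _))
        = ((List.range m').map
          (fun i => @decide (Pgen k 𝒞 fh t m' i) (Classical.propDecidable _))).take m := by
      rw [← List.map_take, List.take_range, min_eq_left hmm']
      refine List.map_congr_left (fun i hi => ?_)
      rw [List.mem_range] at hi
      refine decide_eq_decide.mpr ⟨?_, ?_⟩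
      · rintro ⟨j, hj, Y, hY, hsub, hfh2⟩
        exact ⟨j, hj.trans hmm', Y, hY, lsubset_trans hsub (lsubset_of_prefix hst), hfh2⟩
      · rintro ⟨j, hj, Y, hY, hsub, hfh2⟩
        refine ⟨min j m, min_le_right j m, Y, hY, ?_, ?_⟩
        · intro i' hi'
          rw [restr_getD] at hi'
          have h1 : (restr Y (k j)).getD i' false = true :=
            (restr_getD ..).mpr ⟨lt_of_lt_of_le hi'.1 (hk.monotone (min_le_left j m)), hi'.2⟩
          have h2 := hsub i' h1
          have hlt : i' < s.length := by
            rw [hm]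
            exact lt_of_lt_of_le hi'.1 (hk.monotone (min_le_right j m))
          rw [← getD_of_prefix hst hlt]
          exact h2
        · rcases le_or_gt j m with h | h
          · rw [min_eq_left h]; exact hfh2
          · rw [min_eq_right h.le]
            have hp : fh (restr Y (k m)) <+: fh (restr Y (k j)) :=
              hpre _ ⟨Y, hY, m, rfl⟩ _ ⟨Y, hY, j, rfl⟩ (restr_prefix Y (hk.monotone h.le))
            have hl : i < (fh (restr Y (k m))).length := by
              rw [hfhlen Y hY m]; exact hi
            rw [← getD_of_prefix hp hl]
            exact hfh2
    rw [heq]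
    exact List.take_prefix _ _
  · -- monotone
    rintro s ⟨m, hm⟩ t ⟨m', hm'⟩ hst i hi
    rw [ghAux_getD hk 𝒞 fh hm] at hi
    obtain ⟨him, j, hj, Y, hY, hsub, hfh2⟩ := hi
    have hbound : ∀ i', (restr Y (k j)).getD i' false = true → i' < k m' := by
      intro i' h1
      have h2 := getD_true_lt_length (hst i' (hsub i' h1))
      rwa [hm'] at h2
    have hsub2 : lsubset (restr Y (k j)) (restr Y (k m')) := lsubset_restr_of_lt hbound
    have hsubt : lsubset (restr Y (k (min j m'))) t := by
      intro i' h1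
      rw [restr_getD] at h1
      exact hst i' (hsub i' ((restr_getD ..).mpr
        ⟨lt_of_lt_of_le h1.1 (hk.monotone (min_le_left j m')), h1.2⟩))
    have hfh' : (fh (restr Y (k (min j m')))).getD i false = true := by
      rcases le_or_gt j m' with h | h
      · rw [min_eq_left h]; exact hfh2
      · rw [min_eq_right h.le]
        exact hmon _ ⟨Y, hY, j, rfl⟩ _ ⟨Y, hY, m', rfl⟩ hsub2 i hfh2
    have hij' : i < min j m' := by
      have h2 := getD_true_lt_length hfh'
      rwa [hfhlen Y hY (min j m')] at h2
    rw [ghAux_getD hk 𝒞 fh hm']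
    exact ⟨lt_of_lt_of_le hij' (min_le_right j m'),
      min j m', min_le_right j m', Y, hY, hsubt, hfh'⟩

/-- Extension Lemma: if `U`, `V` are nonprincipal ultrafilters, `f : U → V` is a
monotone cofinal map, and `f` is generated by a basic map on a cofinal `𝒞 ⊆ U`,
then there is a monotone map `f̃ : 2^ω → 2^ω` which is generated by a basic map
(on all of `⋃_m 2^{k_m}`), agrees with `f` on `𝒞`, and restricts to a cofinal map
from `U` to `V`. -/
theorem extension_lemma (U V : Ultrafilter ℕ)
    (hU : ∀ a : ℕ, U ≠ pure a) (hV : ∀ a : ℕ, V ≠ pure a)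
    (f : Set ℕ → Set ℕ) (hmono : MonotoneOnU U f) (hcof : IsCofinalMap U V f)
    (𝒞 : Set (Set ℕ)) (h𝒞 : IsCofinalSub U 𝒞)
    (k : ℕ → ℕ) (fh : List Bool → List Bool)
    (hbasic : IsBasicOn k (levelsOf k 𝒞) fh)
    (hgen : GeneratesOn k fh f 𝒞) :
    ∃ ftil : Set ℕ → Set ℕ,
      (∀ X Y : Set ℕ, Y ⊆ X → ftil Y ⊆ ftil X) ∧
      (∃ (k' : ℕ → ℕ) (gh : List Bool → List Bool),
        IsBasicOn k' {s | ∃ m, s.length = k' m} gh ∧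
        GeneratesOn k' gh ftil Set.univ) ∧
      (∀ X ∈ 𝒞, ftil X = f X) ∧
      IsCofinalMap U V ftil := by
  have hk : StrictMono k := hbasic.1
  have hmonC := hbasic.2.2.2.2
  have hfhlen : ∀ Y ∈ 𝒞, ∀ j, (fh (restr Y (k j))).length = j := fun Y hY j =>
    hbasic.2.2.1 _ ⟨Y, hY, j, rfl⟩ j (restr_length Y (k j))
  set gh := ghAux k 𝒞 fh with hgh
  set ftil : Set ℕ → Set ℕ :=
    fun X => {i | ∃ m, (gh (restr X (k m))).getD i false = true} with hftil
  have hgd : ∀ (X : Set ℕ) (m i : ℕ), (gh (restr X (k m))).getD i false = true ↔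
      i < m ∧ Pgen k 𝒞 fh (restr X (k m)) m i := fun X m i =>
    ghAux_getD hk 𝒞 fh (restr_length X (k m)) i
  -- If X ⊆ Y and Y ∈ 𝒞 then ftil X ⊆ f Y.
  have hC3 : ∀ X Y : Set ℕ, X ⊆ Y → Y ∈ 𝒞 → ftil X ⊆ f Y := by
    intro X Y hXY hY i hi
    obtain ⟨m, hm⟩ := hi
    rw [hgd] at hm
    obtain ⟨him, j, hj, Z, hZ, hsub, hfh2⟩ := hm
    have hsub' : lsubset (restr Z (k j)) (restr Y (k j)) := by
      intro i' h1
      have h2 := hsub i' h1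
      rw [restr_getD] at h1 h2 ⊢
      exact ⟨h1.1, hXY h2.2⟩
    have hmem := hmonC _ ⟨Z, hZ, j, rfl⟩ _ ⟨Y, hY, j, rfl⟩ hsub' i hfh2
    rw [hgen Y hY]
    exact ⟨j, hmem⟩
  -- If Y ⊆ X and Y ∈ 𝒞 then f Y ⊆ ftil X.
  have hC4 : ∀ X Y : Set ℕ, Y ⊆ X → Y ∈ 𝒞 → f Y ⊆ ftil X := by
    intro X Y hYX hY i hi
    rw [hgen Y hY] at hi
    obtain ⟨m, hm⟩ := hi
    have him : i < m := by
      have h2 := getD_true_lt_length hm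
      rwa [hfhlen Y hY m] at h2
    exact ⟨m, (hgd X m i).mpr
      ⟨him, m, le_refl m, Y, hY, lsubset_restr_restr hYX (le_refl _), hm⟩⟩
  have hV𝒞 : IsCofinalSub V (f '' 𝒞) := hcof 𝒞 h𝒞
  refine ⟨ftil, ?_, ⟨k, gh, ghAux_basic hbasic, fun X _ => rfl⟩, ?_, ?_⟩
  · -- monotone on all of 2^ω
    intro X Y hYX i hi
    obtain ⟨m, hm⟩ := hi
    obtain ⟨him, j, hj, Z, hZ, hsub, hfh2⟩ := (hgd Y m i).mp hm
    exact ⟨m, (hgd X m i).mpr ⟨him, j, hj, Z, hZ,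
      lsubset_trans hsub (lsubset_restr_restr hYX (le_refl _)), hfh2⟩⟩
  · -- agrees with f on 𝒞
    intro X hX
    exact Set.Subset.antisymm (hC3 X X (subset_refl X) hX) (hC4 X X (subset_refl X) hX)
  · -- cofinal from U to V
    intro D hD
    constructor
    · rintro W ⟨X, hXD, rfl⟩
      obtain ⟨Y, hY𝒞, hYX⟩ := h𝒞.2 X (hD.1 X hXD)
      have hfY : f Y ∈ V := hV𝒞.1 _ ⟨Y, hY𝒞, rfl⟩
      exact Filter.mem_of_superset hfY (hC4 X Y hYX hY𝒞)
    · intro Z hZ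
      obtain ⟨W, ⟨Y, hY𝒞, rfl⟩, hWZ⟩ := hV𝒞.2 Z hZ
      obtain ⟨X, hXD, hXY⟩ := hD.2 Y (h𝒞.1 Y hY𝒞)
      exact ⟨ftil X, ⟨X, hXD, rfl⟩, (hC3 X Y hXY hY𝒞).trans hWZ⟩
end

section
/- Let f̃ : 2^ω → 2^ω be continuous, C ⊆ 2^ω with closure C̄ compact in 2^ω, and D̄ = f̃''C̄. Then for each Y ∈ D̄ and each m < ω, there is an m̃ ≥ m such that: for every Z ∈ C̄ with f̃(Z)↾m̃ = Y↾m̃, there is an X ∈ C̄ with f̃(X) = Y and X↾k_m = Z↾k_m, where (k_m) is any fixed strictly increasing sequence. -/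
/-- The restriction `X↾n` of `X ∈ 2^ω` to its first `n` coordinates. -/
def restrB (X : ℕ → Bool) (n : ℕ) : List Bool := (List.range n).map X

lemma restrB_eq_iff {X X' : ℕ → Bool} {n : ℕ} :
    restrB X n = restrB X' n ↔ ∀ i < n, X i = X' i := by
  simp [restrB, List.map_inj_left]

lemma restrB_mono {X X' : ℕ → Bool} {a b : ℕ} (h : a ≤ b)
    (hb : restrB X b = restrB X' b) : restrB X a = restrB X' a := by
  rw [restrB_eq_iff] at hb ⊢
  exact fun i hi => hb i (lt_of_lt_of_le hi h)

lemma isClopen_restrB (W₀ : ℕ → Bool) (n : ℕ) :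
    IsClopen {W : ℕ → Bool | restrB W n = restrB W₀ n} := by
  have : {W : ℕ → Bool | restrB W n = restrB W₀ n}
      = ⋂ i ∈ Finset.range n, {W : ℕ → Bool | W i = W₀ i} := by
    ext W
    simp [restrB_eq_iff, Set.mem_iInter]
  rw [this]
  refine isClopen_biInter_finset fun i _ => ?_
  exact (isClopen_discrete {W₀ i}).preimage (continuous_apply i)

/-- Compactness/uniformization claim: if `f̃ : 2^ω → 2^ω` is continuous and `C̄` is the
(compact) closure of `C ⊆ 2^ω`, then for each `Y ∈ f̃''C̄` and `m`, there is `m̃ ≥ m`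
such that whenever `Z ∈ C̄` satisfies `f̃(Z)↾m̃ = Y↾m̃`, there exists `X ∈ C̄` with
`f̃(X) = Y` and `ĝ(X↾k_m) = ĝ(Z↾k_m)`, for any fixed finitary function `ĝ`. -/
theorem exists_uniform_level
    (ftil : (ℕ → Bool) → (ℕ → Bool)) (hf : Continuous ftil)
    (C : Set (ℕ → Bool)) (hcomp : IsCompact (closure C))
    (k : ℕ → ℕ) (hk : StrictMono k) (g : List Bool → List Bool) :
    ∀ Y ∈ ftil '' closure C, ∀ m : ℕ, ∃ mt : ℕ, m ≤ mt ∧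
      ∀ Z ∈ closure C, restrB (ftil Z) mt = restrB Y mt →
        ∃ X ∈ closure C, ftil X = Y ∧
          g (restrB X (k m)) = g (restrB Z (k m)) := by
  intro Y hY m
  by_contra hcon
  push_neg at hcon
  -- the bad sets
  set A : ℕ → Set (ℕ → Bool) := fun n =>
    {Z | Z ∈ closure C ∧ restrB (ftil Z) n = restrB Y n ∧
      ∀ X ∈ closure C, ftil X = Y → g (restrB X (k m)) ≠ g (restrB Z (k m))} with hA
  have hanti : ∀ n, A (n + 1) ⊆ A n := by
    intro n Z hZ
    exact ⟨hZ.1, restrB_mono (Nat.le_succ n) hZ.2.1, hZ.2.2⟩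
  have hne : ∀ n, (A n).Nonempty := by
    intro n
    obtain ⟨Z, hZC, hZr, hZbad⟩ := hcon (max m n) (le_max_left _ _)
    refine ⟨Z, hZC, restrB_mono (le_max_right m n) hZr, ?_⟩
    intro X hX hfX hg
    exact hZbad X hX hfX hg
  have hclosed : ∀ n, IsClosed (A n) := by
    intro n
    -- A n = (closure C ∩ preimage of clopen) ∩ badset, badset is clopen-ish
    have h1 : IsClosed {Z : ℕ → Bool | restrB (ftil Z) n = restrB Y n} :=
      ((isClopen_restrB Y n).preimage hf).isClosed
    have h2 : IsClosed {Z : ℕ → Bool |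
        ∀ X ∈ closure C, ftil X = Y → g (restrB X (k m)) ≠ g (restrB Z (k m))} := by
      rw [← isOpen_compl_iff]
      rw [isOpen_iff_forall_mem_open]
      intro Z₀ hZ₀
      refine ⟨{Z | restrB Z (k m) = restrB Z₀ (k m)}, ?_,
        (isClopen_restrB Z₀ (k m)).isOpen, rfl⟩
      intro Z hZ hbad
      apply hZ₀
      intro X hX hfX hg
      exact hbad X hX hfX (by rw [hg, hZ])
    have : A n = closure C ∩ ({Z : ℕ → Bool | restrB (ftil Z) n = restrB Y n} ∩
        {Z : ℕ → Bool |
          ∀ X ∈ closure C, ftil X = Y → g (restrB X (k m)) ≠ g (restrB Z (k m))}) := by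
      ext Z; simp [hA, and_assoc]; tauto
    rw [this]
    exact isClosed_closure.inter (h1.inter h2)
  have hcomp0 : IsCompact (A 0) :=
    hcomp.of_isClosed_subset (hclosed 0) (fun Z hZ => hZ.1)
  obtain ⟨Z, hZ⟩ := IsCompact.nonempty_iInter_of_sequence_nonempty_isCompact_isClosed
    A hanti hne hcomp0 hclosed
  have hZn : ∀ n, Z ∈ A n := Set.mem_iInter.mp hZ
  have hfZ : ftil Z = Y := by
    funext i
    have := (hZn (i + 1)).2.1
    rw [restrB_eq_iff] at this
    exact this i (Nat.lt_succ_self i)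
  exact (hZn 0).2.2 Z (hZn 0).1 hfZ rfl
end

section
/- If B_{{n}} is a front on ω \ (n+1) for each n ∈ ω, then B = ⋃_{n∈ω} {{n} ∪ a : a ∈ B_{{n}}} is a front on ω. Moreover, if each B_{{n}} is a flat-top front, then B is a flat-top front. -/
/-- `a` is an initial segment of `b` (with respect to increasing enumerations). -/
def FinInitSeg (a b : Finset ℕ) : Prop :=
  a ⊆ b ∧ ∀ x ∈ b, ∀ y ∈ a, x ≤ y → x ∈ a

/-- `a` is an initial segment of the (infinite) set `X`. -/
def FinInitSegSet (a : Finset ℕ) (X : Set ℕ) : Prop :=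
  (↑a : Set ℕ) ⊆ X ∧ ∀ x ∈ X, ∀ y ∈ a, x ≤ y → x ∈ a

/-- `B` is a front on `I`. -/
def IsFront (I : Set ℕ) (B : Set (Finset ℕ)) : Prop :=
  (∀ b ∈ B, (↑b : Set ℕ) ⊆ I) ∧
  (∀ a ∈ B, ∀ b ∈ B, FinInitSeg a b → a = b) ∧
  (∀ X : Set ℕ, X ⊆ I → X.Infinite → ∃ b ∈ B, FinInitSegSet b X)

/-- `B` is a flat-top front on `I`: a front with `B ≠ {∅}` such that either
`B = [I]^1`, or `B ⊆ [I]^{≥2}` and for each `b ∈ B`, letting `a = b \ {max b}`,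
the set `{c \ a : c ∈ B, c ⊐ a}` equals `[I \ (max a + 1)]^1`. -/
def IsFlatTop (I : Set ℕ) (B : Set (Finset ℕ)) : Prop :=
  IsFront I B ∧ B ≠ {(∅ : Finset ℕ)} ∧
  (B = {c : Finset ℕ | c.card = 1 ∧ (↑c : Set ℕ) ⊆ I} ∨
    ((∀ b ∈ B, 2 ≤ b.card) ∧
     ∀ b ∈ B, ∀ m : ℕ, b.max = (m : WithBot ℕ) →
       ((∀ c ∈ B, FinInitSeg (b.erase m) c → b.erase m ≠ c →
           ∃ x ∈ I, (∀ y ∈ b.erase m, y < x) ∧ c = insert x (b.erase m)) ∧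
        (∀ x ∈ I, (∀ y ∈ b.erase m, y < x) → insert x (b.erase m) ∈ B))))

private lemma head_eq {n n' : ℕ} {a a' : Finset ℕ}
    (ha : ∀ x ∈ a, n < x) (ha' : ∀ x ∈ a', n' < x)
    (h : FinInitSeg (insert n a) (insert n' a')) :
    n = n' ∧ FinInitSeg a a' := by
  obtain ⟨hsub, hcl⟩ := h
  have hn : n ∈ insert n' a' := hsub (Finset.mem_insert_self n a)
  have hn'n : n' ≤ n := by
    rcases Finset.mem_insert.1 hn with h | h
    · exact h.symm.le
    · exact (ha' n h).le
  have hnn' : n = n' := by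
    have := hcl n' (Finset.mem_insert_self n' a') n (Finset.mem_insert_self n a) hn'n
    rcases Finset.mem_insert.1 this with h | h
    · exact h.symm
    · exact absurd (ha n' h) (not_lt.2 hn'n)
  subst hnn'
  refine ⟨rfl, ?_, ?_⟩
  · intro x hx
    have := hsub (Finset.mem_insert_of_mem hx)
    rcases Finset.mem_insert.1 this with h | h
    · exact absurd h (by have := ha x hx; omega)
    · exact h
  · intro x hx y hy hxy
    have := hcl x (Finset.mem_insert_of_mem hx) y (Finset.mem_insert_of_mem hy) hxy
    rcases Finset.mem_insert.1 this with h | h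
    · exact absurd (ha' x hx) (by omega)
    · exact h

private lemma max_insert_head {n m : ℕ} {a : Finset ℕ} (ha : ∀ x ∈ a, n < x)
    (hane : a.Nonempty) (hm : (insert n a).max = (m : WithBot ℕ)) :
    m ∈ a ∧ a.max = (m : WithBot ℕ) ∧ n < m := by
  have hmmem : m ∈ insert n a := Finset.mem_of_max hm
  have hle : ∀ y ∈ insert n a, y ≤ m := fun y hy => Finset.le_max_of_eq hy hm
  obtain ⟨k, hk⟩ := hane
  have hkm : k ≤ m := hle k (Finset.mem_insert_of_mem hk)
  have hnm : n < m := lt_of_lt_of_le (ha k hk) hkm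
  have hma : m ∈ a := by
    rcases Finset.mem_insert.1 hmmem with h | h
    · omega
    · exact h
  refine ⟨hma, le_antisymm ?_ (Finset.le_max hma), hnm⟩
  exact Finset.max_le fun y hy =>
    WithBot.coe_le_coe.2 (hle y (Finset.mem_insert_of_mem hy))

/-- If each `B_{{n}}` is a front on `ω \ (n+1)`, then
`B = ⋃_n {{n} ∪ a : a ∈ B_{{n}}}` is a front on `ω`; moreover if each `B_{{n}}`
is a flat-top front, then `B` is a flat-top front. -/
theorem front_sum_is_front (Bn : ℕ → Set (Finset ℕ))
    (hBn : ∀ n, IsFront (Set.Ioi n) (Bn n)) :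
    IsFront Set.univ {c : Finset ℕ | ∃ n : ℕ, ∃ a ∈ Bn n, c = insert n a} ∧
    ((∀ n, IsFlatTop (Set.Ioi n) (Bn n)) →
      IsFlatTop Set.univ {c : Finset ℕ | ∃ n : ℕ, ∃ a ∈ Bn n, c = insert n a}) := by
  set B := {c : Finset ℕ | ∃ n : ℕ, ∃ a ∈ Bn n, c = insert n a} with hBdef
  have hIoi : ∀ n, ∀ a ∈ Bn n, ∀ x ∈ a, n < x := fun n a ha x hx => (hBn n).1 a ha hx
  have hanti : ∀ c ∈ B, ∀ c' ∈ B, FinInitSeg c c' → c = c' := by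
    rintro _ ⟨n, a, ha, rfl⟩ _ ⟨n', a', ha', rfl⟩ hseg
    obtain ⟨hnn, hseg'⟩ := head_eq (hIoi n a ha) (hIoi n' a' ha') hseg
    subst hnn
    rw [(hBn n).2.1 a ha a' ha' hseg']
  have hfront : IsFront Set.univ B := by
    refine ⟨fun b _ => Set.subset_univ _, hanti, ?_⟩
    intro X _ hX
    have hXne : X.Nonempty := hX.nonempty
    set n := sInf X with hn
    have hnX : n ∈ X := Nat.sInf_mem hXne
    have hmin : ∀ x ∈ X, n ≤ x := fun x hx => Nat.sInf_le hx
    set X' := X ∩ Set.Ioi n with hX'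
    have hX'inf : X'.Infinite := by
      refine (hX.diff (Set.finite_singleton n)).mono ?_
      rintro x ⟨hx1, hx2⟩
      exact ⟨hx1, lt_of_le_of_ne (hmin x hx1) (Ne.symm (by simpa using hx2))⟩
    obtain ⟨a, ha, hsub, hcl⟩ := (hBn n).2.2 X' Set.inter_subset_right hX'inf
    refine ⟨insert n a, ⟨n, a, ha, rfl⟩, ?_, ?_⟩
    · intro x hx
      simp only [Finset.coe_insert, Set.mem_insert_iff, Finset.mem_coe] at hx
      rcases hx with h | h
      · subst h; exact hnX
      · exact (hsub h).1
    · intro x hx y hy hxy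
      rcases eq_or_lt_of_le (hmin x hx) with h | h
      · exact Finset.mem_insert.2 (Or.inl h.symm)
      · rcases Finset.mem_insert.1 hy with hyn | hya
        · omega
        · exact Finset.mem_insert_of_mem (hcl x ⟨hx, h⟩ y hya hxy)
  refine ⟨hfront, ?_⟩
  intro hFT
  have hne : ∀ n, ∀ a ∈ Bn n, a.Nonempty := by
    intro n a ha
    rcases (hFT n).2.2 with h | h
    · rw [h] at ha
      exact Finset.card_pos.1 (by rw [ha.1]; norm_num)
    · exact Finset.card_pos.1 (by have := h.1 a ha; omega)
  refine ⟨hfront, ?_, Or.inr ⟨?_, ?_⟩⟩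
  · intro h
    have hmem : (∅ : Finset ℕ) ∈ B := h ▸ rfl
    obtain ⟨n, a, ha, hemp⟩ := hmem
    exact (Finset.insert_ne_empty n a) hemp.symm
  · rintro _ ⟨n, a, ha, rfl⟩
    have h1 : n ∉ a := fun h => lt_irrefl n (hIoi n a ha n h)
    rw [Finset.card_insert_of_notMem h1]
    have := (hne n a ha).card_pos
    omega
  · rintro _ ⟨n, a, ha, rfl⟩ m hm
    have haI := hIoi n a ha
    obtain ⟨hma, hmax_a, hnm⟩ := max_insert_head haI (hne n a ha) hm
    have herase : (insert n a).erase m = insert n (a.erase m) :=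
      Finset.erase_insert_of_ne hnm.ne
    have hem : ∀ x ∈ a.erase m, n < x := fun x hx => haI x (Finset.mem_of_mem_erase hx)
    rcases (hFT n).2.2 with hcase | hcase
    · -- Bn n is the set of singletons of Ioi n
      have ha1 : a.card = 1 := by rw [hcase] at ha; exact ha.1
      obtain ⟨k, rfl⟩ := Finset.card_eq_one.1 ha1
      have hmk : m = k := by simpa using hma
      subst hmk
      have her2 : ({m} : Finset ℕ).erase m = ∅ := Finset.erase_singleton m
      rw [herase, her2]
      constructor
      · rintro _ ⟨n', a', ha', rfl⟩ hseg hne'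
        have ha'I := hIoi n' a' ha'
        obtain ⟨hnn, _⟩ := head_eq (by simp) ha'I hseg
        subst hnn
        obtain ⟨x, hx⟩ := Finset.card_eq_one.1 (by rw [hcase] at ha'; exact ha'.1)
        have hnx : n < x := ha'I x (by rw [hx]; exact Finset.mem_singleton_self x)
        refine ⟨x, Set.mem_univ x, ?_, ?_⟩
        · intro y hy
          rcases Finset.mem_insert.1 hy with rfl | hy'
          · exact hnx
          · exact absurd hy' (Finset.notMem_empty y)
        · rw [hx]; ext y; simp [or_comm]
      · intro x _ hx
        have hnx : n < x := hx n (Finset.mem_insert_self n ∅)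
        refine ⟨n, {x}, ?_, ?_⟩
        · rw [hcase]
          exact ⟨Finset.card_singleton x, by simpa using hnx⟩
        · ext y; simp [or_comm]
    · -- all members of Bn n have card ≥ 2
      obtain ⟨hA', hB'⟩ := hcase.2 a ha m hmax_a
      rw [herase]
      constructor
      · rintro _ ⟨n', a', ha', rfl⟩ hseg hneq
        obtain ⟨hnn, hseg'⟩ := head_eq hem (hIoi n' a' ha') hseg
        subst hnn
        have hane : a.erase m ≠ a' := fun h => hneq (by rw [h])
        obtain ⟨x, hxI, hxgt, hxeq⟩ := hA' a' ha' hseg' hane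
        refine ⟨x, Set.mem_univ x, ?_, ?_⟩
        · intro y hy
          rcases Finset.mem_insert.1 hy with rfl | hy'
          · exact Set.mem_Ioi.1 hxI
          · exact hxgt y hy'
        · rw [hxeq, Finset.insert_comm]
      · intro x _ hx
        have hnx : n < x := hx n (Finset.mem_insert_self _ _)
        have hx' : ∀ y ∈ a.erase m, y < x := fun y hy => hx y (Finset.mem_insert_of_mem hy)
        exact ⟨n, _, hB' x (Set.mem_Ioi.2 hnx) hx', by rw [Finset.insert_comm]⟩
end

section
/- If T is a U⃗-tree on a flat-top front B, then the set [T] of maximal branches through T is contained in B, and the collection {[T] : T a U⃗-tree} is a filter base (closed under finite intersection up to refinement: the intersection of two U⃗-trees is a U⃗-tree) generating an ultrafilter on base set B. -/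
/-- `B̂`: the tree of all initial segments of members of `B`. -/
def Bhat (B : Set (Finset ℕ)) : Set (Finset ℕ) :=
  {a | ∃ b ∈ B, FinInitSeg a b}

/-- A `U⃗`-tree: a subtree `T ⊆ B̂` containing `∅`, closed under initial segments,
such that for each `c ∈ T ∩ B̂⁻` the set of immediate extensions of `c` in `T`
belongs to `Uc c`. -/
def IsUTree (B : Set (Finset ℕ)) (Uc : Finset ℕ → Ultrafilter ℕ)
    (T : Set (Finset ℕ)) : Prop :=
  T ⊆ Bhat B ∧ ∅ ∈ T ∧
  (∀ b ∈ T, ∀ a : Finset ℕ, FinInitSeg a b → a ∈ T) ∧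
  (∀ c ∈ T, c ∈ Bhat B \ B → {n : ℕ | insert n c ∈ T} ∈ Uc c)

/-- `[T]`: the set of maximal branches through `T`. -/
def maxBr (T : Set (Finset ℕ)) : Set (Finset ℕ) :=
  {c | c ∈ T ∧ ∀ c' ∈ T, FinInitSeg c c' → c = c'}

/-- `U` is a nonprincipal ultrafilter. -/
def NonPrincipal (U : Ultrafilter ℕ) : Prop := ∀ a : ℕ, U ≠ pure a

/-- `G` is an ultrafilter on the base set `Bse`. -/
def IsUltrafilterOn (Bse : Set (Finset ℕ)) (G : Set (Set (Finset ℕ))) : Prop :=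
  (∅ ∉ G) ∧
  (∀ A ∈ G, A ⊆ Bse) ∧
  (∀ A ∈ G, ∀ A' : Set (Finset ℕ), A ⊆ A' → A' ⊆ Bse → A' ∈ G) ∧
  (∀ A1 ∈ G, ∀ A2 ∈ G, A1 ∩ A2 ∈ G) ∧
  (∀ A : Set (Finset ℕ), A ⊆ Bse → (A ∈ G ∨ Bse \ A ∈ G))

lemma fis_refl (a : Finset ℕ) : FinInitSeg a a :=
  ⟨subset_rfl, fun x hx _ _ _ => hx⟩

lemma fis_empty (a : Finset ℕ) : FinInitSeg ∅ a :=
  ⟨Finset.empty_subset a, fun x _ y hy => absurd hy (Finset.notMem_empty y)⟩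

lemma fis_trans {a b c : Finset ℕ} (h1 : FinInitSeg a b) (h2 : FinInitSeg b c) :
    FinInitSeg a c :=
  ⟨h1.1.trans h2.1, fun x hx y hy hxy => h1.2 x (h2.2 x hx y (h1.1 hy) hxy) y hy hxy⟩

lemma fis_antisymm {a b : Finset ℕ} (h1 : FinInitSeg a b) (h2 : FinInitSeg b a) : a = b :=
  Finset.Subset.antisymm h1.1 h2.1

lemma fis_comparable {a b : Finset ℕ} {X : Set ℕ} (ha : FinInitSegSet a X)
    (hb : FinInitSegSet b X) : FinInitSeg a b ∨ FinInitSeg b a := by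
  by_cases hsub : a ⊆ b
  · exact Or.inl ⟨hsub, fun x hx z hz hxz => ha.2 x (hb.1 hx) z hz hxz⟩
  · obtain ⟨y, hy1, hy2⟩ := Finset.not_subset.mp hsub
    have hy : y ∈ a ∧ y ∉ b := ⟨hy1, hy2⟩
    have hsub : b ⊆ a := by
      intro z hz
      rcases le_total z y with h | h
      · exact ha.2 z (hb.1 hz) y hy.1 h
      · exact absurd (hb.2 y (ha.1 hy.1) z hz h) hy.2
    exact Or.inr ⟨hsub, fun x hx z hz hxz => hb.2 x (ha.1 hx) z hz hxz⟩

/-- members of `B` are maximal in `Bhat B`. -/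
lemma mem_B_max {B : Set (Finset ℕ)} (hanti : ∀ a ∈ B, ∀ b ∈ B, FinInitSeg a b → a = b)
    {b d : Finset ℕ} (hb : b ∈ B) (hd : d ∈ Bhat B) (hbd : FinInitSeg b d) : b = d := by
  obtain ⟨b', hb', hdb'⟩ := hd
  have := hanti b hb b' hb' (fis_trans hbd hdb')
  subst this
  exact fis_antisymm hbd hdb'

lemma np_infinite {U : Ultrafilter ℕ} (hU : NonPrincipal U) {s : Set ℕ} (hs : s ∈ U) :
    s.Infinite := by
  intro hfin
  obtain ⟨x, _, hx⟩ := Ultrafilter.eq_pure_of_finite_mem hfin hs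
  exact hU x hx

lemma np_cofinite {U : Ultrafilter ℕ} (hU : NonPrincipal U) (m : ℕ) :
    {n : ℕ | m ≤ n} ∈ U := by
  rcases Ultrafilter.mem_or_compl_mem U {n : ℕ | m ≤ n} with h | h
  · exact h
  · exfalso
    have hfin : ({n : ℕ | m ≤ n}ᶜ : Set ℕ).Finite := by
      have : ({n : ℕ | m ≤ n}ᶜ : Set ℕ) ⊆ Set.Iio m := by
        intro n hn
        simpa using hn
      exact (Set.finite_Iio m).subset this
    obtain ⟨x, _, hx⟩ := Ultrafilter.eq_pure_of_finite_mem hfin h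
    exact hU x hx

/-- A finite set is an initial segment of `↑c ∪ [n,∞)` when it equals `c`. -/
lemma key_ext {B : Set (Finset ℕ)} (hF : IsFront Set.univ B) {c : Finset ℕ}
    (hc : c ∈ Bhat B \ B) {n : ℕ} (hn : ∀ y ∈ c, y < n) : insert n c ∈ Bhat B := by
  obtain ⟨⟨b, hb, hcb⟩, hcB⟩ := hc
  have hcbne : c ≠ b := fun h => hcB (h ▸ hb)
  set X : Set ℕ := ↑c ∪ Set.Ici n with hX
  have hXinf : X.Infinite := Set.Infinite.mono Set.subset_union_right (Set.Ici_infinite n)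
  obtain ⟨b', hb', hb'X⟩ := hF.2.2 X (Set.subset_univ X) hXinf
  have hcX : FinInitSegSet c X := by
    refine ⟨Set.subset_union_left, fun x hx y hy hxy => ?_⟩
    rcases hx with hx | hx
    · exact hx
    · exact absurd hxy (not_le.mpr (lt_of_lt_of_le (hn y hy) hx))
  rcases fis_comparable hb'X hcX with h | h
  · -- b' initial seg of c, so b' init seg of b, so b' = b, but b' ⊆ c ⊊ b
    have := hF.2.1 b' hb' b hb (fis_trans h hcb)
    subst this
    exact absurd (fis_antisymm h hcb) (Ne.symm hcbne)
  · -- c proper initial seg of b'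
    have hne : c ≠ b' := fun hE => hcB (hE ▸ hb')
    obtain ⟨w, hw1, hw2⟩ := Finset.exists_of_ssubset (h.1.ssubset_of_ne hne)
    have hwX : w ∈ X := hb'X.1 hw1
    have hwn : n ≤ w := by
      rcases hwX with hw | hw
      · exact absurd hw hw2
      · exact hw
    have hnb' : n ∈ b' := hb'X.2 n (Or.inr (le_refl n)) w hw1 hwn
    refine ⟨b', hb', ?_, fun x hx y hy hxy => ?_⟩
    · intro z hz
      rcases Finset.mem_insert.mp hz with rfl | hz
      · exact hnb'
      · exact h.1 hz
    · rcases Finset.mem_insert.mp hy with rfl | hy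
      · rcases hb'X.1 hx with hx' | hx'
        · exact Finset.mem_insert_of_mem hx'
        · exact Finset.mem_insert.mpr (Or.inl (le_antisymm hxy hx'))
      · exact Finset.mem_insert_of_mem (h.2 x hx y hy hxy)

def ExtRel (B : Set (Finset ℕ)) (d c : Finset ℕ) : Prop :=
  FinInitSeg c d ∧ c ≠ d ∧ d ∈ Bhat B

lemma extRel_wf {B : Set (Finset ℕ)} (hF : IsFront Set.univ B) :
    WellFounded (ExtRel B) := by
  constructor
  intro c0
  by_contra hc0
  have step : ∀ c : Finset ℕ, ¬ Acc (ExtRel B) c →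
      ∃ d, ExtRel B d c ∧ ¬ Acc (ExtRel B) d := by
    intro c hc
    by_contra h
    push_neg at h
    exact hc (Acc.intro c fun d hd => h d hd)
  let f : ℕ → {x : Finset ℕ // ¬ Acc (ExtRel B) x} := fun k =>
    Nat.rec ⟨c0, hc0⟩ (fun _ p => ⟨(step p.1 p.2).choose,
      (step p.1 p.2).choose_spec.2⟩) k
  have hfR : ∀ k, ExtRel B (f (k + 1)).1 (f k).1 := fun k =>
    (step (f k).1 (f k).2).choose_spec.1
  have hmono : ∀ j k, j ≤ k → FinInitSeg (f j).1 (f k).1 := by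
    intro j k hjk
    induction k with
    | zero => simpa [Nat.le_zero.mp hjk] using fis_refl (f 0).1
    | succ k ih =>
      rcases Nat.lt_or_ge j (k + 1) with h | h
      · exact fis_trans (ih (Nat.lt_succ_iff.mp h)) (hfR k).1
      · have : j = k + 1 := le_antisymm hjk h
        subst this; exact fis_refl _
  have hssub : ∀ k, (f k).1 ⊂ (f (k + 1)).1 := fun k =>
    Finset.ssubset_iff_subset_ne.mpr ⟨(hfR k).1.1, (hfR k).2.1⟩
  have hcard : ∀ k, k ≤ ((f k).1).card := by
    intro k
    induction k with
    | zero => exact Nat.zero_le _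
    | succ k ih => exact Nat.lt_of_le_of_lt ih (Finset.card_lt_card (hssub k))
  set X : Set ℕ := ⋃ k, ((f k).1 : Set ℕ) with hX
  have hsubX : ∀ k, ((f k).1 : Set ℕ) ⊆ X := fun k => Set.subset_iUnion (fun m => (((f m).1 : Set ℕ))) k
  have hXinf : X.Infinite := by
    intro hfin
    have h1 : ∀ k, ((f k).1).card ≤ hfin.toFinset.card := by
      intro k
      apply Finset.card_le_card
      intro x hx
      exact hfin.mem_toFinset.mpr (hsubX k hx)
    have := le_trans (hcard (hfin.toFinset.card + 1)) (h1 (hfin.toFinset.card + 1))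
    omega
  have hinit : ∀ k, FinInitSegSet (f k).1 X := by
    intro k
    refine ⟨hsubX k, fun x hx y hy hxy => ?_⟩
    obtain ⟨_, ⟨m, rfl⟩, hxm⟩ := hx
    rcases le_total m k with h | h
    · exact (hmono m k h).1 hxm
    · exact (hmono k m h).2 x hxm y hy hxy
  obtain ⟨b, hb, hbX⟩ := hF.2.2 X (Set.subset_univ X) hXinf
  -- b ⊆ f k for some k
  have hbk : ∃ k, b ⊆ (f k).1 := by
    have hch : ∀ y ∈ b, ∃ m, y ∈ (f m).1 := by
      intro y hy
      obtain ⟨_, ⟨m, rfl⟩, hym⟩ := hbX.1 hy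
      exact ⟨m, hym⟩
    choose! idx hidx using hch
    refine ⟨b.sup idx, fun y hy => ?_⟩
    exact (hmono (idx y) (b.sup idx) (Finset.le_sup hy)).1 (hidx y hy)
  obtain ⟨k, hk⟩ := hbk
  have heq : ∀ j, k ≤ j → (f (j + 1)).1 = b := by
    intro j hj
    have hbf : FinInitSeg b (f (j + 1)).1 :=
      ⟨hk.trans (hmono k (j + 1) (le_trans hj (Nat.le_succ j))).1,
       fun x hx y hy hxy => hbX.2 x (hsubX (j + 1) (Finset.mem_coe.mpr hx)) y hy hxy⟩
    exact (mem_B_max hF.2.1 hb (hfR j).2.2 hbf).symm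
  have h1 := heq k (le_refl k)
  have h2 := heq (k + 1) (Nat.le_succ k)
  exact absurd (h1.trans h2.symm) (ne_of_ssubset (hssub (k + 1)))

lemma maxBr_subset_B {B : Set (Finset ℕ)} {Uc : Finset ℕ → Ultrafilter ℕ}
    (hUc : ∀ c, NonPrincipal (Uc c)) {T : Set (Finset ℕ)} (hT : IsUTree B Uc T) :
    maxBr T ⊆ B := by
  intro c hc
  by_contra hcB
  have hcBh : c ∈ Bhat B \ B := ⟨hT.1 hc.1, hcB⟩
  have hmem := hT.2.2.2 c hc.1 hcBh
  have hinf := np_infinite (hUc c) hmem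
  obtain ⟨m, hm⟩ : ∃ m, ∀ y ∈ c, y < m := ⟨(c.sup id) + 1, fun y hy =>
    Nat.lt_succ_of_le (Finset.le_sup (f := id) hy)⟩
  obtain ⟨n, hn1, hn2⟩ := hinf.exists_gt m
  have hnc : n ∉ c := fun h => absurd hn2 (not_lt.mpr (le_of_lt (hm n h)))
  have hfis : FinInitSeg c (insert n c) := by
    refine ⟨Finset.subset_insert n c, fun x hx y hy hxy => ?_⟩
    rcases Finset.mem_insert.mp hx with rfl | hx
    · exact absurd hxy (not_le.mpr (lt_trans (hm y hy) hn2))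
    · exact hx
  have := hc.2 (insert n c) hn1 hfis
  exact hnc (this ▸ Finset.mem_insert_self n c)

lemma mem_maxBr_of_mem_B {B T : Set (Finset ℕ)}
    (hanti : ∀ a ∈ B, ∀ b ∈ B, FinInitSeg a b → a = b)
    (hTB : T ⊆ Bhat B) {c : Finset ℕ} (hc : c ∈ T) (hcB : c ∈ B) : c ∈ maxBr T :=
  ⟨hc, fun c' hc' hcc' => mem_B_max hanti hcB (hTB hc') hcc'⟩

lemma maxBr_nonempty {B : Set (Finset ℕ)} (hF : IsFront Set.univ B)
    {Uc : Finset ℕ → Ultrafilter ℕ} {T : Set (Finset ℕ)} (hT : IsUTree B Uc T) :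
    (maxBr T).Nonempty := by
  obtain ⟨m, hm, hmin⟩ := (extRel_wf hF).has_min T ⟨∅, hT.2.1⟩
  refine ⟨m, hm, fun c' hc' hmc' => ?_⟩
  by_contra hne
  exact hmin c' hc' ⟨hmc', hne, hT.1 hc'⟩

lemma inter_utree {B : Set (Finset ℕ)} {Uc : Finset ℕ → Ultrafilter ℕ}
    {T1 T2 : Set (Finset ℕ)} (h1 : IsUTree B Uc T1) (h2 : IsUTree B Uc T2) :
    IsUTree B Uc (T1 ∩ T2) := by
  refine ⟨fun c hc => h1.1 hc.1, ⟨h1.2.1, h2.2.1⟩, ?_, ?_⟩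
  · intro b hb a hab
    exact ⟨h1.2.2.1 b hb.1 a hab, h2.2.2.1 b hb.2 a hab⟩
  · intro c hc hcBh
    have := (Uc c).toFilter.inter_mem (h1.2.2.2 c hc.1 hcBh) (h2.2.2.2 c hc.2 hcBh)
    exact Filter.mem_of_superset this fun n hn => ⟨hn.1, hn.2⟩

def URootedTree (B : Set (Finset ℕ)) (Uc : Finset ℕ → Ultrafilter ℕ)
    (c : Finset ℕ) (T : Set (Finset ℕ)) : Prop :=
  T ⊆ Bhat B ∧ c ∈ T ∧ (∀ d ∈ T, FinInitSeg c d) ∧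
  (∀ b ∈ T, ∀ a : Finset ℕ, FinInitSeg a b → FinInitSeg c a → a ∈ T) ∧
  (∀ d ∈ T, d ∈ Bhat B \ B → {n : ℕ | insert n d ∈ T} ∈ Uc d)

def Rooted (B : Set (Finset ℕ)) (Uc : Finset ℕ → Ultrafilter ℕ)
    (c : Finset ℕ) (A : Set (Finset ℕ)) : Prop :=
  ∃ T, URootedTree B Uc c T ∧ maxBr T ⊆ A

lemma rooted_base {B : Set (Finset ℕ)} {Uc : Finset ℕ → Ultrafilter ℕ}
    {c : Finset ℕ} (hc : c ∈ B) {A : Set (Finset ℕ)} (hcA : c ∈ A) :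
    Rooted B Uc c A := by
  refine ⟨{c}, ⟨?_, rfl, ?_, ?_, ?_⟩, ?_⟩
  · intro d hd
    rw [Set.mem_singleton_iff] at hd
    exact hd ▸ ⟨c, hc, fis_refl c⟩
  · intro d hd; rw [Set.mem_singleton_iff] at hd; exact hd ▸ fis_refl c
  · intro b hb a hab hca
    rw [Set.mem_singleton_iff] at hb; subst hb
    exact Set.mem_singleton_iff.mpr (fis_antisymm hca hab).symm
  · intro d hd hdBh
    rw [Set.mem_singleton_iff] at hd; subst hd
    exact absurd hc hdBh.2
  · intro e he
    have := he.1
    rw [Set.mem_singleton_iff] at this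
    exact this ▸ hcA

lemma fis_insert {c : Finset ℕ} {n : ℕ} (hn : ∀ y ∈ c, y < n) :
    FinInitSeg c (insert n c) := by
  refine ⟨Finset.subset_insert n c, fun x hx y hy hxy => ?_⟩
  rcases Finset.mem_insert.mp hx with rfl | hx
  · exact absurd hxy (not_le.mpr (hn y hy))
  · exact hx

lemma insert_ne {c : Finset ℕ} {n : ℕ} (hn : ∀ y ∈ c, y < n) : c ≠ insert n c := by
  intro h
  have : n ∈ c := h ▸ Finset.mem_insert_self n c
  exact absurd (hn n this) (lt_irrefl n)

lemma rooted_glue {B : Set (Finset ℕ)} {Uc : Finset ℕ → Ultrafilter ℕ}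
    {c : Finset ℕ} (hc : c ∈ Bhat B) {A : Set (Finset ℕ)} {N : Set ℕ}
    (hN : N ∈ Uc c) (hNbig : ∀ n ∈ N, ∀ y ∈ c, y < n)
    (hNr : ∀ n ∈ N, Rooted B Uc (insert n c) A) :
    Rooted B Uc c A := by
  choose! Tn hTn hTnA using hNr
  set T : Set (Finset ℕ) := {c} ∪ ⋃ n ∈ N, Tn n with hT
  have hmemT : ∀ d, d ∈ T ↔ d = c ∨ ∃ n ∈ N, d ∈ Tn n := by
    intro d
    simp [hT]
  refine ⟨T, ⟨?_, ?_, ?_, ?_, ?_⟩, ?_⟩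
  · -- T ⊆ Bhat B
    intro d hd
    rcases (hmemT d).mp hd with rfl | ⟨n, hn, hdn⟩
    · exact hc
    · exact (hTn n hn).1 hdn
  · exact (hmemT c).mpr (Or.inl rfl)
  · -- all of T extends c
    intro d hd
    rcases (hmemT d).mp hd with heq | ⟨n, hn, hdn⟩
    · exact heq ▸ fis_refl c
    · exact fis_trans (fis_insert (hNbig n hn)) ((hTn n hn).2.2.1 d hdn)
  · -- downward closure above c
    intro b hb a hab hca
    rcases (hmemT b).mp hb with heq | ⟨n, hn, hbn⟩
    · exact (hmemT a).mpr (Or.inl (fis_antisymm (heq ▸ hab) hca))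
    · by_cases hac : a = c
      · exact (hmemT a).mpr (Or.inl hac)
      · refine (hmemT a).mpr (Or.inr ⟨n, hn, ?_⟩)
        have hicb : FinInitSeg (insert n c) b := (hTn n hn).2.2.1 b hbn
        -- a properly extends c; show insert n c initial seg of a
        obtain ⟨w, hw1, hw2⟩ := Finset.exists_of_ssubset (hca.1.ssubset_of_ne (Ne.symm hac))
        have hwb : w ∈ b := hab.1 hw1
        have hnw : n ≤ w := by
          by_contra hlt
          push_neg at hlt
          have : w ∈ insert n c := hicb.2 w hwb n (Finset.mem_insert_self n c) (le_of_lt hlt)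
          rcases Finset.mem_insert.mp this with rfl | h
          · exact absurd hlt (lt_irrefl w)
          · exact hw2 h
        have hna : n ∈ a := hab.2 n (hicb.1 (Finset.mem_insert_self n c)) w hw1 hnw
        have hica : FinInitSeg (insert n c) a := by
          refine ⟨?_, fun x hx y hy hxy => hicb.2 x (hab.1 hx) y hy hxy⟩
          intro z hz
          rcases Finset.mem_insert.mp hz with rfl | hz
          · exact hna
          · exact hca.1 hz
        exact (hTn n hn).2.2.2.1 b hbn a hab hica
  · -- branching
    intro d hd hdBh
    rcases (hmemT d).mp hd with rfl | ⟨n, hn, hdn⟩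
    · refine (Uc d).toFilter.mem_of_superset hN fun n hn => ?_
      exact (hmemT _).mpr (Or.inr ⟨n, hn, (hTn n hn).2.1⟩)
    · refine (Uc d).toFilter.mem_of_superset ((hTn n hn).2.2.2.2 d hdn hdBh)
        fun n' hn' => (hmemT _).mpr (Or.inr ⟨n, hn, hn'⟩)
  · -- maxBr T ⊆ A
    intro e he
    rcases (hmemT e).mp he.1 with rfl | ⟨n, hn, hen⟩
    · exfalso
      obtain ⟨n, hn⟩ := (Uc e).nonempty_of_mem hN
      have hmem : insert n e ∈ T := (hmemT _).mpr (Or.inr ⟨n, hn, (hTn n hn).2.1⟩)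
      exact insert_ne (hNbig n hn) (he.2 (insert n e) hmem (fis_insert (hNbig n hn)))
    · refine hTnA n hn ⟨hen, fun c' hc' hec' => ?_⟩
      exact he.2 c' ((hmemT c').mpr (Or.inr ⟨n, hn, hc'⟩)) hec'

lemma rooted_dichotomy {B : Set (Finset ℕ)} (hF : IsFront Set.univ B)
    {Uc : Finset ℕ → Ultrafilter ℕ} (hUc : ∀ c, NonPrincipal (Uc c))
    (A : Set (Finset ℕ)) :
    ∀ c, c ∈ Bhat B → Rooted B Uc c A ∨ Rooted B Uc c (B \ A) := by
  intro c
  induction c using (extRel_wf hF).induction with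
  | _ c ih =>
    intro hc
    by_cases hcB : c ∈ B
    · by_cases hcA : c ∈ A
      · exact Or.inl (rooted_base hcB hcA)
      · exact Or.inr (rooted_base hcB ⟨hcB, hcA⟩)
    · have hcBh : c ∈ Bhat B \ B := ⟨hc, hcB⟩
      obtain ⟨m, hm⟩ : ∃ m, ∀ y ∈ c, y < m := ⟨(c.sup id) + 1, fun y hy =>
        Nat.lt_succ_of_le (Finset.le_sup (f := id) hy)⟩
      have hE : {n : ℕ | m ≤ n} ∈ Uc c := np_cofinite (hUc c) m
      have hEr : ∀ n ∈ {n : ℕ | m ≤ n},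
          Rooted B Uc (insert n c) A ∨ Rooted B Uc (insert n c) (B \ A) := by
        intro n hn
        have hbig : ∀ y ∈ c, y < n := fun y hy => lt_of_lt_of_le (hm y hy) hn
        have hins : insert n c ∈ Bhat B := key_ext hF hcBh hbig
        exact ih (insert n c) ⟨fis_insert hbig, insert_ne hbig, hins⟩ hins
      set N1 : Set ℕ := {n | m ≤ n ∧ Rooted B Uc (insert n c) A} with hN1
      set N2 : Set ℕ := {n | m ≤ n ∧ Rooted B Uc (insert n c) (B \ A)} with hN2
      have hun : {n : ℕ | m ≤ n} ⊆ N1 ∪ N2 := by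
        intro n hn
        rcases hEr n hn with h | h
        · exact Or.inl ⟨hn, h⟩
        · exact Or.inr ⟨hn, h⟩
      have : N1 ∪ N2 ∈ Uc c := (Uc c).toFilter.mem_of_superset hE hun
      rcases Ultrafilter.union_mem_iff.mp this with h | h
      · exact Or.inl (rooted_glue hc h (fun n hn => fun y hy =>
          lt_of_lt_of_le (hm y hy) hn.1) (fun n hn => hn.2))
      · exact Or.inr (rooted_glue hc h (fun n hn => fun y hy =>
          lt_of_lt_of_le (hm y hy) hn.1) (fun n hn => hn.2))

lemma rooted_empty_utree {B : Set (Finset ℕ)} {Uc : Finset ℕ → Ultrafilter ℕ}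
    {A : Set (Finset ℕ)} (h : Rooted B Uc ∅ A) :
    ∃ T, IsUTree B Uc T ∧ maxBr T ⊆ A := by
  obtain ⟨T, ⟨h1, h2, _, h4, h5⟩, h6⟩ := h
  exact ⟨T, ⟨h1, h2, fun b hb a hab => h4 b hb a hab (fis_empty a), h5⟩, h6⟩

/-- For a flat-top front `B` and nonprincipal ultrafilters `Uc`: the maximal
branches of any `U⃗`-tree lie in `B`, the intersection of two `U⃗`-trees is a
`U⃗`-tree (so `{[T]}` is a filter base), and the sets `[T]` generate an
ultrafilter on base set `B`. -/
theorem utrees_generate_ultrafilter (B : Set (Finset ℕ))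
    (hB : IsFlatTop Set.univ B)
    (Uc : Finset ℕ → Ultrafilter ℕ) (hUc : ∀ c, NonPrincipal (Uc c)) :
    (∀ T : Set (Finset ℕ), IsUTree B Uc T → maxBr T ⊆ B) ∧
    (∀ T1 T2 : Set (Finset ℕ), IsUTree B Uc T1 → IsUTree B Uc T2 →
      IsUTree B Uc (T1 ∩ T2)) ∧
    IsUltrafilterOn B
      {A : Set (Finset ℕ) | A ⊆ B ∧ ∃ T, IsUTree B Uc T ∧ maxBr T ⊆ A} := by
  obtain ⟨hF, -⟩ := hB
  refine ⟨fun T hT => maxBr_subset_B hUc hT,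
    fun T1 T2 h1 h2 => inter_utree h1 h2, ?_, ?_, ?_, ?_, ?_⟩
  · -- ∅ ∉ G
    rintro ⟨-, T, hT, hmax⟩
    obtain ⟨e, he⟩ := maxBr_nonempty hF hT
    exact hmax he
  · exact fun A hA => hA.1
  · rintro A ⟨-, T, hT, hmax⟩ A' hAA' hA'B
    exact ⟨hA'B, T, hT, hmax.trans hAA'⟩
  · rintro A1 ⟨hA1B, T1, hT1, hm1⟩ A2 ⟨hA2B, T2, hT2, hm2⟩
    refine ⟨fun c hc => hA1B hc.1, T1 ∩ T2, inter_utree hT1 hT2, ?_⟩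
    intro c hc
    have hcB : c ∈ B := maxBr_subset_B hUc (inter_utree hT1 hT2) hc
    exact ⟨hm1 (mem_maxBr_of_mem_B hF.2.1 hT1.1 hc.1.1 hcB),
      hm2 (mem_maxBr_of_mem_B hF.2.1 hT2.1 hc.1.2 hcB)⟩
  · -- dichotomy
    intro A hAB
    have hBne : ∃ b, b ∈ B := by
      obtain ⟨b, hb, -⟩ := hF.2.2 Set.univ subset_rfl Set.infinite_univ
      exact ⟨b, hb⟩
    obtain ⟨b, hb⟩ := hBne
    have hemp : (∅ : Finset ℕ) ∈ Bhat B := ⟨b, hb, fis_empty b⟩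
    rcases rooted_dichotomy hF hUc A ∅ hemp with h | h
    · obtain ⟨T, hT, hm⟩ := rooted_empty_utree h
      exact Or.inl ⟨hAB, T, hT, hm⟩
    · obtain ⟨T, hT, hm⟩ := rooted_empty_utree h
      exact Or.inr ⟨Set.diff_subset, T, hT, hm⟩
end
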